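/- In H = SL_q(F_q), let h₁ = diag(1, λ, ..., λ) with λ ∈ F_q*. Then every element h of the k-fold product set (h₁^H ∪ (h₁⁻¹)^H)^{*k} has at least q - k eigenvalues (counted with multiplicity in the algebraic closure) lying in the cyclic subgroup ⟨λ⟩ of F_q*. -/

import Mathlib

open Polynomial Matrix

section RankAux

variable {K : Type*} [Field K] {n : Type*} [Fintype n] [DecidableEq n]

omit [DecidableEq n] in
lemma myRank_add_le (A B : Matrix n n K) : (A + B).rank ≤ A.rank + B.rank := by
  classical
  have h : LinearMap.range (A + B).mulVecLin ≤
      LinearMap.range A.mulVecLin ⊔ LinearMap.range B.mulVecLin := by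
    rw [Matrix.mulVecLin_add]
    rintro x ⟨v, rfl⟩
    exact Submodule.mem_sup.2 ⟨A.mulVecLin v, ⟨v, rfl⟩, B.mulVecLin v, ⟨v, rfl⟩, rfl⟩
  exact (Submodule.finrank_mono h).trans
    (Submodule.finrank_add_le_finrank_add_finrank _ _)

lemma myRank_smul_le (c : K) (A : Matrix n n K) : (c • A).rank ≤ A.rank := by
  have : c • A = (c • (1 : Matrix n n K)) * A := by
    rw [smul_mul_assoc, one_mul]
  rw [this]
  exact rank_mul_le_right _ _

lemma myRank_mul_sub_smul_one (A B : Matrix n n K) (a b : K) :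
    (A * B - (a * b) • (1 : Matrix n n K)).rank ≤
      (A - a • (1 : Matrix n n K)).rank + (B - b • (1 : Matrix n n K)).rank := by
  have key : A * B - (a * b) • (1 : Matrix n n K)
      = A * (B - b • (1 : Matrix n n K)) + b • (A - a • (1 : Matrix n n K)) := by
    have h1 : A * (b • (1 : Matrix n n K)) = b • A := by
      rw [mul_smul_comm, mul_one]
    rw [mul_sub, h1, smul_sub, smul_smul, mul_comm b a]
    abel
  rw [key, add_comm ((A - a • (1 : Matrix n n K)).rank)]
  exact (myRank_add_le _ _).trans
    (add_le_add (rank_mul_le_right A _) (myRank_smul_le b _))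

lemma myRank_list_prod_sub_smul_one :
    ∀ L : List (Matrix n n K × K),
      ((L.map Prod.fst).prod - (L.map Prod.snd).prod • (1 : Matrix n n K)).rank ≤
        (L.map (fun p => (p.1 - p.2 • (1 : Matrix n n K)).rank)).sum
  | [] => by simp
  | p :: t => by
    simp only [List.map_cons, List.prod_cons, List.sum_cons]
    refine (myRank_mul_sub_smul_one _ _ _ _).trans ?_
    exact Nat.add_le_add_left (myRank_list_prod_sub_smul_one t) _

lemma rank_conj_le' (U V G : Matrix n n K) (hUV : U * V = 1) (c : K) :
    (U * G * V - c • (1 : Matrix n n K)).rank ≤ (G - c • (1 : Matrix n n K)).rank := by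
  have key : U * G * V - c • (1 : Matrix n n K)
      = U * ((G - c • (1 : Matrix n n K)) * V) := by
    rw [sub_mul, mul_sub, ← mul_assoc]
    congr 1
    rw [smul_mul_assoc, one_mul, mul_smul_comm, hUV]
  rw [key]
  exact (rank_mul_le_right _ _).trans (rank_mul_le_left _ _)

lemma rank_diag_sub_le_one {m : ℕ} (y x : K) :
    ((Matrix.diagonal (fun i : Fin m => if (i : ℕ) = 0 then y else x))
      - x • (1 : Matrix (Fin m) (Fin m) K)).rank ≤ 1 := by
  classical
  have hd : (Matrix.diagonal (fun i : Fin m => if (i : ℕ) = 0 then y else x))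
      - x • (1 : Matrix (Fin m) (Fin m) K)
      = Matrix.diagonal (fun i : Fin m => if (i : ℕ) = 0 then y - x else 0) := by
    ext i j
    by_cases hij : i = j
    · subst hij
      by_cases h0 : (i : ℕ) = 0 <;>
        simp [Matrix.diagonal_apply_eq, Matrix.one_apply_eq, h0]
    · simp [Matrix.diagonal_apply_ne _ hij, Matrix.one_apply_ne hij]
  rw [hd, Matrix.rank_diagonal]
  refine Fintype.card_le_one_iff.2 ?_
  rintro ⟨i, hi⟩ ⟨j, hj⟩
  have hi0 : (i : ℕ) = 0 := by by_contra h; simp [h] at hi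
  have hj0 : (j : ℕ) = 0 := by by_contra h; simp [h] at hj
  exact Subtype.ext (Fin.ext (hi0.trans hj0.symm))

lemma charpoly_sub_smul_one (M : Matrix n n K) (μ : K) :
    (M - μ • (1 : Matrix n n K)).charpoly = M.charpoly.comp (X + C μ) := by
  classical
  let g : K[X] →+* K[X] := eval₂RingHom C (X + C μ)
  have hg : M.charpoly.comp (X + C μ) = g M.charpoly := rfl
  rw [hg, Matrix.charpoly, Matrix.charpoly, RingHom.map_det, RingHom.mapMatrix_apply]
  congr 1
  refine Matrix.ext fun i j => ?_
  rw [Matrix.map_apply]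
  by_cases hij : i = j
  · subst hij
    rw [charmatrix_apply_eq, charmatrix_apply_eq, map_sub]
    have h1 : g X = X + C μ := by simp [g]
    have h2 : g (C (M i i)) = C (M i i) := by simp [g]
    have h3 : (M - μ • (1 : Matrix n n K)) i i = M i i - μ := by
      simp [Matrix.one_apply_eq]
    rw [h1, h2, h3, C_sub]
    ring
  · rw [charmatrix_apply_ne _ _ _ hij, charmatrix_apply_ne _ _ _ hij, map_neg]
    have h2 : g (C (M i j)) = C (M i j) := by simp [g]
    have h3 : (M - μ • (1 : Matrix n n K)) i j = M i j := by
      simp [Matrix.one_apply_ne hij]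
    rw [h2, h3]

lemma le_rootMultiplicity_of_rank {m : ℕ} (M : Matrix (Fin m) (Fin m) K) (μ : K) :
    m - (M - μ • (1 : Matrix (Fin m) (Fin m) K)).rank ≤ M.charpoly.rootMultiplicity μ := by
  classical
  set N := M - μ • (1 : Matrix (Fin m) (Fin m) K) with hN
  have h1 : M.charpoly.rootMultiplicity μ = N.charpoly.natTrailingDegree := by
    rw [rootMultiplicity_eq_rootMultiplicity, ← charpoly_sub_smul_one,
      rootMultiplicity_eq_natTrailingDegree']
  set φ : Module.End K (Fin m → K) := N.mulVecLin with hφ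
  have hch : φ.charpoly = N.charpoly := by
    rw [← LinearMap.charpoly_toMatrix φ (Pi.basisFun K (Fin m)),
      LinearMap.toMatrix_eq_toMatrix']
    congr 1
    rw [hφ, ← Matrix.toLin'_apply', LinearMap.toMatrix'_toLin']
  have hker : LinearMap.ker φ ≤ φ.maxGenEigenspace 0 := by
    intro x hx
    rw [Module.End.mem_maxGenEigenspace]
    refine ⟨1, ?_⟩
    simpa using hx
  have h2 : Module.finrank K (LinearMap.ker φ) ≤ N.charpoly.natTrailingDegree := by
    rw [← hch, ← LinearMap.finrank_maxGenEigenspace_zero_eq]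
    exact Submodule.finrank_mono hker
  have h3 : N.rank + Module.finrank K (LinearMap.ker φ) = m := by
    have h4 := LinearMap.finrank_range_add_finrank_ker φ
    have h5 : Module.finrank K (Fin m → K) = m := by simp
    rw [h5] at h4
    exact h4
  omega

end RankAux

/-- The coercion from the special linear group to matrices, as a monoid hom. -/
def slCoeHom {n : Type*} [DecidableEq n] [Fintype n] {R : Type*} [CommRing R] :
    Matrix.SpecialLinearGroup n R →* Matrix n n R where
  toFun g := g
  map_one' := Matrix.SpecialLinearGroup.coe_one
  map_mul' _ _ := rfl



open Classical in
/-- in `H = SL_q(F_q)`, with `h₁ = diag(1, λ, …, λ)`, every element of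
`(h₁^H ∪ (h₁⁻¹)^H)^{*k}` has at least `q - k` eigenvalues (with multiplicity, in the
algebraic closure) lying in the subgroup generated by `λ`. -/
theorem eigenvalues_of_products_of_conjugates (q : ℕ) (F : Type*) [Field F] [Fintype F]
    (hF : Fintype.card F = q) (lam : F) (hlam : lam ≠ 0)
    (h₁ : Matrix.SpecialLinearGroup (Fin q) F)
    (hh₁ : (h₁ : Matrix (Fin q) (Fin q) F) =
      Matrix.diagonal (fun i : Fin q => if (i : ℕ) = 0 then 1 else lam))
    (k : ℕ) (h : Matrix.SpecialLinearGroup (Fin q) F)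
    (hh : ∃ f : Fin k → Matrix.SpecialLinearGroup (Fin q) F,
      (∀ i, IsConj h₁ (f i) ∨ IsConj h₁⁻¹ (f i)) ∧ h = (List.ofFn f).prod) :
    (q : ℤ) - (k : ℤ) ≤
      Multiset.countP (fun x => x ∈ Submonoid.powers (algebraMap F (AlgebraicClosure F) lam))
        ((Matrix.charpoly (h : Matrix (Fin q) (Fin q) F)).aroots (AlgebraicClosure F)) := by
  obtain ⟨f, hf, hprod⟩ := hh
  set K := AlgebraicClosure F with hK
  set ι : F →+* K := algebraMap F K with hι
  have hq2 : 2 ≤ q := by rw [← hF]; exact Fintype.one_lt_card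
  -- λ⁻¹ is a power of λ
  have hpow : lam⁻¹ = lam ^ (q - 2) := by
    have h1 : lam ^ (q - 1) = 1 := by
      have := FiniteField.pow_card_sub_one_eq_one lam hlam
      rwa [hF] at this
    have h2 : lam ^ (q - 2) * lam = 1 := by
      rw [← pow_succ]
      have : q - 2 + 1 = q - 1 := by omega
      rw [this, h1]
    exact (eq_inv_of_mul_eq_one_left h2).symm
  -- the inverse of h₁ as a matrix
  have hinv : ((h₁⁻¹ : Matrix.SpecialLinearGroup (Fin q) F) : Matrix (Fin q) (Fin q) F)
      = Matrix.diagonal (fun i : Fin q => if (i : ℕ) = 0 then 1 else lam⁻¹) := by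
    set D := Matrix.diagonal (fun i : Fin q => if (i : ℕ) = 0 then 1 else lam⁻¹) with hD
    have hD1 : D * (h₁ : Matrix (Fin q) (Fin q) F) = 1 := by
      rw [hD, hh₁, Matrix.diagonal_mul_diagonal]
      have : (fun i : Fin q => (if (i : ℕ) = 0 then (1:F) else lam⁻¹) *
          (if (i : ℕ) = 0 then (1:F) else lam)) = fun _ => (1 : F) := by
        funext i
        by_cases h0 : (i : ℕ) = 0 <;> simp [h0, inv_mul_cancel₀ hlam]
      rw [this, Matrix.diagonal_one]
    have hright : (h₁ : Matrix (Fin q) (Fin q) F) *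
        ((h₁⁻¹ : Matrix.SpecialLinearGroup (Fin q) F) : Matrix (Fin q) (Fin q) F) = 1 := by
      rw [← Matrix.SpecialLinearGroup.coe_mul, mul_inv_cancel,
        Matrix.SpecialLinearGroup.coe_one]
    calc ((h₁⁻¹ : Matrix.SpecialLinearGroup (Fin q) F) : Matrix (Fin q) (Fin q) F)
        = 1 * ((h₁⁻¹ : Matrix.SpecialLinearGroup (Fin q) F) : Matrix (Fin q) (Fin q) F) :=
          (one_mul _).symm
      _ = D * ((h₁ : Matrix (Fin q) (Fin q) F) *
            ((h₁⁻¹ : Matrix.SpecialLinearGroup (Fin q) F) : Matrix (Fin q) (Fin q) F)) := by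
          rw [← hD1, mul_assoc]
      _ = D := by rw [hright, mul_one]
  -- the scalar attached to each factor
  set c : Fin k → F := fun i => if IsConj h₁ (f i) then lam else lam⁻¹ with hc
  have hcmem : ∀ i, c i ∈ Submonoid.powers lam := by
    intro i
    simp only [hc]
    split
    · exact ⟨1, pow_one lam⟩
    · exact ⟨q - 2, hpow.symm⟩
  -- rank bound for each factor, over the algebraic closure
  have hfac : ∀ i, (((f i : Matrix (Fin q) (Fin q) F)).map ι
      - ι (c i) • (1 : Matrix (Fin q) (Fin q) K)).rank ≤ 1 := by
    intro i
    have hdiag : ∀ (g : Matrix.SpecialLinearGroup (Fin q) F) (x : F),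
        (g : Matrix (Fin q) (Fin q) F) =
          Matrix.diagonal (fun j : Fin q => if (j : ℕ) = 0 then 1 else x) →
        IsConj g (f i) →
        (((f i : Matrix (Fin q) (Fin q) F)).map ι
          - ι x • (1 : Matrix (Fin q) (Fin q) K)).rank ≤ 1 := by
      intro g x hg hconj
      obtain ⟨u, hu⟩ := isConj_iff.1 hconj
      have hmap : ((f i : Matrix (Fin q) (Fin q) F)).map ι
          = ((u : Matrix (Fin q) (Fin q) F).map ι) * ((g : Matrix (Fin q) (Fin q) F).map ι)
            * (((u⁻¹ : Matrix.SpecialLinearGroup (Fin q) F) : Matrix (Fin q) (Fin q) F).map ι) := by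
        rw [← hu, Matrix.SpecialLinearGroup.coe_mul, Matrix.SpecialLinearGroup.coe_mul,
          Matrix.map_mul, Matrix.map_mul]
      have hUV : ((u : Matrix (Fin q) (Fin q) F).map ι)
          * (((u⁻¹ : Matrix.SpecialLinearGroup (Fin q) F) : Matrix (Fin q) (Fin q) F).map ι)
          = 1 := by
        rw [← Matrix.map_mul, ← Matrix.SpecialLinearGroup.coe_mul, mul_inv_cancel,
          Matrix.SpecialLinearGroup.coe_one, Matrix.map_one ι ι.map_zero ι.map_one]
      rw [hmap]
      refine (rank_conj_le' _ _ _ hUV _).trans ?_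
      have hgm : (g : Matrix (Fin q) (Fin q) F).map ι
          = Matrix.diagonal (fun j : Fin q => if (j : ℕ) = 0 then 1 else ι x) := by
        rw [hg, Matrix.diagonal_map ι.map_zero]
        refine congrArg Matrix.diagonal (funext fun j => ?_)
        by_cases h0 : (j : ℕ) = 0 <;> simp [h0]
      rw [hgm]
      exact rank_diag_sub_le_one _ _
    rcases hf i with hconj | hconj
    · have := hdiag h₁ lam hh₁ hconj
      simpa only [hc, if_pos hconj] using this
    · by_cases hpos : IsConj h₁ (f i)
      · have := hdiag h₁ lam hh₁ hpos
        simpa only [hc, if_pos hpos] using this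
      · have := hdiag h₁⁻¹ lam⁻¹ hinv hconj
        simpa only [hc, if_neg hpos] using this
  -- the list of (matrix, scalar) pairs
  set L : List (Matrix (Fin q) (Fin q) K × K) :=
    List.ofFn (fun i => (((f i : Matrix (Fin q) (Fin q) F)).map ι, ι (c i))) with hL
  set μF : F := (List.ofFn c).prod with hμF
  have hfst : (L.map Prod.fst).prod = ((h : Matrix (Fin q) (Fin q) F)).map ι := by
    rw [hL, List.map_ofFn, hprod]
    have h2 : (((List.ofFn f).prod : Matrix.SpecialLinearGroup (Fin q) F) :
        Matrix (Fin q) (Fin q) F).map ι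
        = (ι.mapMatrix.toMonoidHom.comp slCoeHom) (List.ofFn f).prod := rfl
    rw [h2, map_list_prod, List.map_ofFn]
    rfl
  have hsnd : (L.map Prod.snd).prod = ι μF := by
    rw [hL, List.map_ofFn, hμF, map_list_prod, List.map_ofFn]
    rfl
  have hrank : (((h : Matrix (Fin q) (Fin q) F)).map ι
      - ι μF • (1 : Matrix (Fin q) (Fin q) K)).rank ≤ k := by
    rw [← hfst, ← hsnd]
    refine (myRank_list_prod_sub_smul_one L).trans ?_
    have hb : ∀ x ∈ L.map (fun p => (p.1 - p.2 • (1 : Matrix (Fin q) (Fin q) K)).rank), x ≤ 1 := by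
      intro x hx
      rw [hL, List.map_ofFn] at hx
      obtain ⟨i, rfl⟩ := List.mem_ofFn.1 hx
      exact hfac i
    calc (L.map (fun p => (p.1 - p.2 • (1 : Matrix (Fin q) (Fin q) K)).rank)).sum
        ≤ (L.map (fun p => (p.1 - p.2 • (1 : Matrix (Fin q) (Fin q) K)).rank)).length • 1 :=
          List.sum_le_card_nsmul _ 1 hb
      _ = k := by rw [hL, List.length_map, List.length_ofFn, smul_eq_mul, mul_one]
  -- μ lies in the powers of λ
  have hμmem : μF ∈ Submonoid.powers lam := by
    rw [hμF]
    refine list_prod_mem ?_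
    intro x hx
    obtain ⟨i, rfl⟩ := List.mem_ofFn.1 hx
    exact hcmem i
  have hμK : ι μF ∈ Submonoid.powers (ι lam) := by
    obtain ⟨m, hm⟩ := hμmem
    exact ⟨m, by rw [← hm, map_pow]⟩
  -- conclude
  set P := (((h : Matrix (Fin q) (Fin q) F)).map ι).charpoly with hP
  have haroots : (Matrix.charpoly (h : Matrix (Fin q) (Fin q) F)).aroots K = P.roots := by
    rw [aroots_def, hP, Matrix.charpoly_map]
  have hmult : q - k ≤ P.rootMultiplicity (ι μF) := by
    have h6 := le_rootMultiplicity_of_rank (((h : Matrix (Fin q) (Fin q) F)).map ι) (ι μF)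
    rw [← hP] at h6
    omega
  rw [haroots]
  have h7 : q - k ≤ P.roots.count (ι μF) := by
    rw [count_roots]
    exact hmult
  refine le_trans (by omega : (q : ℤ) - (k : ℤ) ≤ ((q - k : ℕ) : ℤ)) ?_
  rw [Nat.cast_le]
  refine le_trans h7 ?_
  rw [Multiset.count, Multiset.countP_eq_card_filter, Multiset.countP_eq_card_filter]
  refine Multiset.card_le_card (Multiset.monotone_filter_right _ ?_)
  intro x hx
  rw [← hx]
  exact hμK
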